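/- Assume either (a) the infimum of R over probability measures on ℝ^D is attained at some probability measure ρ* satisfying ∫ U(θ,θ) ρ*(dθ) ≤ K, or (b) there exists ε₀ > 0 such that every probability measure ρ on ℝ^D with R(ρ) ≤ inf_ρ R(ρ) + ε₀ satisfies ∫ U(θ,θ) ρ(dθ) ≤ K. Then | inf over θ ∈ (ℝ^D)^N of R_N(θ) − inf over probability measures ρ of R(ρ) | ≤ K/N. -/

import Mathlib

open MeasureTheory
open scoped ENNReal

noncomputable section

/-- `R# = 𝔼[y²]`. -/
def Rhash {d : ℕ} (P : Measure ((Fin d → ℝ) × ℝ)) : ℝ := ∫ p, p.2 ^ 2 ∂P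

/-- `V(θ) = -𝔼[y f(x,θ)]`. -/
def Vpot {d D : ℕ} (P : Measure ((Fin d → ℝ) × ℝ))
    (f : (Fin d → ℝ) → (Fin D → ℝ) → ℝ) (θ : Fin D → ℝ) : ℝ :=
  - ∫ p, p.2 * f p.1 θ ∂P

/-- `U(θ,θ') = 𝔼[f(x,θ) f(x,θ')]`. -/
def Upot {d D : ℕ} (P : Measure ((Fin d → ℝ) × ℝ))
    (f : (Fin d → ℝ) → (Fin D → ℝ) → ℝ) (θ θ' : Fin D → ℝ) : ℝ :=
  ∫ p, f p.1 θ * f p.1 θ' ∂P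

/-- Asymptotic (mean-field) risk `R(ρ)`. -/
def Risk {d D : ℕ} (P : Measure ((Fin d → ℝ) × ℝ))
    (f : (Fin d → ℝ) → (Fin D → ℝ) → ℝ) (ρ : Measure (Fin D → ℝ)) : ℝ :=
  Rhash P + 2 * ∫ θ, Vpot P f θ ∂ρ + ∫ θ, ∫ θ', Upot P f θ θ' ∂ρ ∂ρ

/-- Finite-`N` risk `R_N(θ)`. -/
def RiskN {d D : ℕ} (P : Measure ((Fin d → ℝ) × ℝ))
    (f : (Fin d → ℝ) → (Fin D → ℝ) → ℝ) (N : ℕ) (θ : Fin N → Fin D → ℝ) : ℝ :=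
  Rhash P + (2 / (N : ℝ)) * ∑ i, Vpot P f (θ i)
    + (1 / (N : ℝ) ^ 2) * ∑ i, ∑ j, Upot P f (θ i) (θ j)

/-- The empirical measure of a tuple of parameters. -/
def empMeas {D : ℕ} {N : ℕ} (θ : Fin N → Fin D → ℝ) : Measure (Fin D → ℝ) :=
  (N : ℝ≥0∞)⁻¹ • ∑ i, Measure.dirac (θ i)

lemma empMeas_prob {D N : ℕ} (hN : 0 < N) (θ : Fin N → Fin D → ℝ) :
    IsProbabilityMeasure (empMeas θ) := by
  constructor
  simp only [empMeas, Measure.smul_apply, Measure.coe_finset_sum, Finset.sum_apply,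
    measure_univ, smul_eq_mul]
  rw [Finset.sum_const, Finset.card_univ, Fintype.card_fin, nsmul_eq_mul, mul_one,
    ENNReal.inv_mul_cancel]
  · exact_mod_cast Nat.cast_ne_zero.mpr hN.ne'
  · exact ENNReal.natCast_ne_top N

lemma integral_empMeas {D N : ℕ} (θ : Fin N → Fin D → ℝ) (g : (Fin D → ℝ) → ℝ) :
    ∫ x, g x ∂(empMeas θ) = (N : ℝ)⁻¹ * ∑ i, g (θ i) := by
  rw [empMeas, integral_smul_measure,
    integral_finset_sum_measure (fun i _ => (integrable_const (g (θ i))).congr (ae_eq_dirac g).symm)]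
  simp [integral_dirac, ENNReal.toReal_inv]

lemma C_nonneg {d D : ℕ} {f : (Fin d → ℝ) → (Fin D → ℝ) → ℝ} {C : ℝ}
    (hf_bdd : ∀ x θ, |f x θ| ≤ C) : 0 ≤ C :=
  (abs_nonneg _).trans (hf_bdd (fun _ => 0) (fun _ => 0))

lemma absY_int {d : ℕ} (P : Measure ((Fin d → ℝ) × ℝ)) [IsProbabilityMeasure P]
    (hy : Integrable (fun p : (Fin d → ℝ) × ℝ => p.2 ^ 2) P) :
    Integrable (fun p : (Fin d → ℝ) × ℝ => |p.2|) P := by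
  refine Integrable.mono' ((integrable_const 1).add hy) ?_ (ae_of_all _ fun p => ?_)
  · exact measurable_snd.abs.aestronglyMeasurable
  · simp only [Pi.add_apply, Real.norm_eq_abs, abs_abs]
    nlinarith [sq_nonneg (|p.2| - 1), sq_abs p.2]

lemma V_bound {d D : ℕ} (P : Measure ((Fin d → ℝ) × ℝ)) [IsProbabilityMeasure P]
    (f : (Fin d → ℝ) → (Fin D → ℝ) → ℝ) {C : ℝ}
    (hf_bdd : ∀ x θ, |f x θ| ≤ C)
    (hy : Integrable (fun p : (Fin d → ℝ) × ℝ => p.2 ^ 2) P) (θ : Fin D → ℝ) :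
    |Vpot P f θ| ≤ C * ∫ p, |p.2| ∂P := by
  rw [Vpot, abs_neg, ← Real.norm_eq_abs]
  calc ‖∫ p, p.2 * f p.1 θ ∂P‖ ≤ ∫ p, C * |p.2| ∂P := by
        refine norm_integral_le_of_norm_le ((absY_int P hy).const_mul C)
          (ae_of_all _ fun p => ?_)
        rw [Real.norm_eq_abs, abs_mul, mul_comm]
        exact mul_le_mul_of_nonneg_right (hf_bdd p.1 θ) (abs_nonneg _)
    _ = C * ∫ p, |p.2| ∂P := integral_const_mul _ _

lemma U_bound {d D : ℕ} (P : Measure ((Fin d → ℝ) × ℝ)) [IsProbabilityMeasure P]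
    (f : (Fin d → ℝ) → (Fin D → ℝ) → ℝ) {C : ℝ}
    (hf_bdd : ∀ x θ, |f x θ| ≤ C) (θ θ' : Fin D → ℝ) :
    |Upot P f θ θ'| ≤ C ^ 2 := by
  rw [Upot, ← Real.norm_eq_abs]
  have := norm_integral_le_of_norm_le_const (μ := P)
    (f := fun p => f p.1 θ * f p.1 θ') (C := C ^ 2) (ae_of_all _ fun p => by
      rw [Real.norm_eq_abs, abs_mul, sq]
      exact mul_le_mul (hf_bdd p.1 θ) (hf_bdd p.1 θ') (abs_nonneg _) (C_nonneg hf_bdd))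
  simpa using this

lemma V_meas {d D : ℕ} (P : Measure ((Fin d → ℝ) × ℝ)) [IsProbabilityMeasure P]
    (f : (Fin d → ℝ) → (Fin D → ℝ) → ℝ)
    (hf_meas : Measurable (fun p : (Fin d → ℝ) × (Fin D → ℝ) => f p.1 p.2)) :
    StronglyMeasurable (Vpot P f) := by
  have hF : StronglyMeasurable
      (fun q : (Fin D → ℝ) × ((Fin d → ℝ) × ℝ) => q.2.2 * f q.2.1 q.1) :=
    (measurable_snd.snd.mul
      (hf_meas.comp (measurable_snd.fst.prodMk measurable_fst))).stronglyMeasurable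
  exact (hF.integral_prod_right' (ν := P)).neg

lemma U_meas {d D : ℕ} (P : Measure ((Fin d → ℝ) × ℝ)) [IsProbabilityMeasure P]
    (f : (Fin d → ℝ) → (Fin D → ℝ) → ℝ)
    (hf_meas : Measurable (fun p : (Fin d → ℝ) × (Fin D → ℝ) => f p.1 p.2)) :
    StronglyMeasurable (fun q : ((Fin D → ℝ) × (Fin D → ℝ)) => Upot P f q.1 q.2) := by
  have hF : StronglyMeasurable
      (fun q : ((Fin D → ℝ) × (Fin D → ℝ)) × ((Fin d → ℝ) × ℝ) =>
        f q.2.1 q.1.1 * f q.2.1 q.1.2) :=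
    ((hf_meas.comp (measurable_snd.fst.prodMk measurable_fst.fst)).mul
      (hf_meas.comp (measurable_snd.fst.prodMk measurable_fst.snd))).stronglyMeasurable
  exact hF.integral_prod_right' (ν := P)

lemma Udiag_nonneg {d D : ℕ} (P : Measure ((Fin d → ℝ) × ℝ))
    (f : (Fin d → ℝ) → (Fin D → ℝ) → ℝ) (θ : Fin D → ℝ) : 0 ≤ Upot P f θ θ :=
  integral_nonneg fun _ => mul_self_nonneg _

lemma Risk_lb {d D : ℕ} (P : Measure ((Fin d → ℝ) × ℝ)) [IsProbabilityMeasure P]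
    (f : (Fin d → ℝ) → (Fin D → ℝ) → ℝ) {C : ℝ}
    (hf_bdd : ∀ x θ, |f x θ| ≤ C)
    (hy : Integrable (fun p : (Fin d → ℝ) × ℝ => p.2 ^ 2) P)
    (ρ : Measure (Fin D → ℝ)) [IsProbabilityMeasure ρ] :
    Rhash P - 2 * (C * ∫ p, |p.2| ∂P) - C ^ 2 ≤ Risk P f ρ := by
  set B := C * ∫ p, |p.2| ∂P with hB
  have h1 : |∫ θ, Vpot P f θ ∂ρ| ≤ B := by
    have := norm_integral_le_of_norm_le_const (μ := ρ) (f := Vpot P f) (C := B)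
      (ae_of_all _ fun θ => by
        rw [Real.norm_eq_abs]; exact V_bound P f hf_bdd hy θ)
    simpa using this
  have h2 : |∫ θ, ∫ θ', Upot P f θ θ' ∂ρ ∂ρ| ≤ C ^ 2 := by
    have := norm_integral_le_of_norm_le_const (μ := ρ)
      (f := fun θ => ∫ θ', Upot P f θ θ' ∂ρ) (C := C ^ 2)
      (ae_of_all _ fun θ => by
        have := norm_integral_le_of_norm_le_const (μ := ρ)
          (f := fun θ' => Upot P f θ θ') (C := C ^ 2)
          (ae_of_all _ fun θ' => by
            rw [Real.norm_eq_abs]; exact U_bound P f hf_bdd θ θ')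
        simpa using this)
    simpa using this
  rw [Risk]
  have := abs_le.1 h1
  have := abs_le.1 h2
  linarith

lemma double_U_nonneg {d D : ℕ} (P : Measure ((Fin d → ℝ) × ℝ)) [IsProbabilityMeasure P]
    (f : (Fin d → ℝ) → (Fin D → ℝ) → ℝ) {C : ℝ}
    (hf_bdd : ∀ x θ, |f x θ| ≤ C)
    (hf_meas : Measurable (fun p : (Fin d → ℝ) × (Fin D → ℝ) => f p.1 p.2))
    (ρ : Measure (Fin D → ℝ)) [IsProbabilityMeasure ρ] :
    0 ≤ ∫ θ, ∫ θ', Upot P f θ θ' ∂ρ ∂ρ := by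
  have hC := C_nonneg hf_bdd
  set g : (Fin d → ℝ) × ℝ → ℝ := fun p => ∫ θ', f p.1 θ' ∂ρ with hg
  have hgmeas : StronglyMeasurable g := by
    have hF : StronglyMeasurable
        (fun q : ((Fin d → ℝ) × ℝ) × (Fin D → ℝ) => f q.1.1 q.2) :=
      (hf_meas.comp (measurable_fst.fst.prodMk measurable_snd)).stronglyMeasurable
    exact hF.integral_prod_right' (ν := ρ)
  have hgbd : ∀ p, |g p| ≤ C := by
    intro p
    have := norm_integral_le_of_norm_le_const (μ := ρ) (f := fun θ' => f p.1 θ') (C := C)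
      (ae_of_all _ fun θ' => by rw [Real.norm_eq_abs]; exact hf_bdd p.1 θ')
    simpa using this
  have step1 : ∀ θ : Fin D → ℝ, ∫ θ', Upot P f θ θ' ∂ρ = ∫ p, f p.1 θ * g p ∂P := by
    intro θ
    have hint : Integrable (Function.uncurry fun (θ' : Fin D → ℝ) (p : (Fin d → ℝ) × ℝ) =>
        f p.1 θ * f p.1 θ') (ρ.prod P) := by
      refine Integrable.mono' (integrable_const (C ^ 2)) ?_ (ae_of_all _ fun q => ?_)
      · exact ((hf_meas.comp (measurable_snd.fst.prodMk measurable_const)).mul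
          (hf_meas.comp (measurable_snd.fst.prodMk measurable_fst))).aestronglyMeasurable
      · rw [Function.uncurry, Real.norm_eq_abs, abs_mul, sq]
        exact mul_le_mul (hf_bdd _ _) (hf_bdd _ _) (abs_nonneg _) hC
    have hswap := integral_integral_swap hint
    calc ∫ θ', Upot P f θ θ' ∂ρ = ∫ θ', ∫ p, f p.1 θ * f p.1 θ' ∂P ∂ρ := rfl
      _ = ∫ p, ∫ θ', f p.1 θ * f p.1 θ' ∂ρ ∂P := hswap
      _ = ∫ p, f p.1 θ * g p ∂P := by
          refine integral_congr_ae (ae_of_all _ fun p => ?_)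
          dsimp only
          rw [integral_const_mul]
  have hint2 : Integrable (Function.uncurry fun (θ : Fin D → ℝ) (p : (Fin d → ℝ) × ℝ) =>
      f p.1 θ * g p) (ρ.prod P) := by
    refine Integrable.mono' (integrable_const (C ^ 2)) ?_ (ae_of_all _ fun q => ?_)
    · exact ((hf_meas.comp (measurable_snd.fst.prodMk measurable_fst)).stronglyMeasurable.mul
        (hgmeas.comp_measurable measurable_snd)).aestronglyMeasurable
    · rw [Function.uncurry, Real.norm_eq_abs, abs_mul, sq]
      exact mul_le_mul (hf_bdd _ _) (hgbd _) (abs_nonneg _) hC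
  have hswap2 := integral_integral_swap hint2
  calc (0:ℝ) ≤ ∫ p, g p * g p ∂P := integral_nonneg fun p => mul_self_nonneg _
    _ = ∫ p, ∫ θ, f p.1 θ * g p ∂ρ ∂P := by
        refine integral_congr_ae (ae_of_all _ fun p => ?_)
        dsimp only
        rw [integral_mul_const]
    _ = ∫ θ, ∫ p, f p.1 θ * g p ∂P ∂ρ := hswap2.symm
    _ = ∫ θ, ∫ θ', Upot P f θ θ' ∂ρ ∂ρ := by
        refine integral_congr_ae (ae_of_all _ fun θ => ?_)
        dsimp only
        exact (step1 θ).symm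

lemma map_eval_pi' {D N : ℕ} (ρ : Measure (Fin D → ℝ)) [IsProbabilityMeasure ρ] (i : Fin N) :
    Measure.map (fun θv : Fin N → (Fin D → ℝ) => θv i)
      (Measure.pi fun _ : Fin N => ρ) = ρ := by
  ext s hs
  rw [Measure.map_apply (measurable_pi_apply i) hs, Set.eval_preimage, Measure.pi_pi]
  rw [Finset.prod_eq_single i (fun k _ hk => by simp [Function.update_of_ne hk])
    (fun h => absurd (Finset.mem_univ i) h)]
  simp

lemma map_pair_pi {D N : ℕ} (ρ : Measure (Fin D → ℝ)) [IsProbabilityMeasure ρ]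
    (i j : Fin N) (hij : i ≠ j) :
    Measure.map (fun θv : Fin N → (Fin D → ℝ) => (θv i, θv j))
      (Measure.pi fun _ : Fin N => ρ) = ρ.prod ρ := by
  symm
  apply Measure.prod_eq
  intro s t hs ht
  rw [Measure.map_apply ((measurable_pi_apply i).prodMk (measurable_pi_apply j)) (hs.prod ht)]
  have hpre : (fun θv : Fin N → (Fin D → ℝ) => (θv i, θv j)) ⁻¹' (s ×ˢ t)
      = Set.pi Set.univ (fun k => if k = i then s else if k = j then t else Set.univ) := by
    ext θv
    simp only [Set.mem_preimage, Set.mem_prod, Set.mem_pi, Set.mem_univ, true_implies]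
    constructor
    · rintro ⟨h1, h2⟩ k
      by_cases hki : k = i
      · subst hki; simp [h1]
      · by_cases hkj : k = j
        · subst hkj; simp [hki, h2]
        · simp [hki, hkj]
    · intro hk
      refine ⟨?_, ?_⟩
      · have := hk i; simpa using this
      · have := hk j; simpa [hij.symm] using this
  rw [hpre, Measure.pi_pi]
  rw [← Finset.prod_subset (Finset.subset_univ {i, j})
    (fun k _ hk => by
      simp only [Finset.mem_insert, Finset.mem_singleton, not_or] at hk
      simp [hk.1, hk.2])]
  rw [Finset.prod_pair hij]
  simp [hij, hij.symm]

lemma RiskN_eq_emp {d D N : ℕ} (hN : 0 < N) (P : Measure ((Fin d → ℝ) × ℝ))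
    (f : (Fin d → ℝ) → (Fin D → ℝ) → ℝ) (θ : Fin N → Fin D → ℝ) :
    RiskN P f N θ = Risk P f (empMeas θ) := by
  have hN' : (N : ℝ) ≠ 0 := Nat.cast_ne_zero.mpr hN.ne'
  rw [Risk, RiskN, integral_empMeas,
    integral_empMeas θ (fun θ0 => ∫ θ', Upot P f θ0 θ' ∂(empMeas θ))]
  simp_rw [integral_empMeas]
  rw [← Finset.mul_sum]
  field_simp

lemma exists_good_params {d D N : ℕ} (hN : 0 < N)
    (P : Measure ((Fin d → ℝ) × ℝ)) [IsProbabilityMeasure P]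
    (f : (Fin d → ℝ) → (Fin D → ℝ) → ℝ) {C : ℝ}
    (hf_bdd : ∀ x θ, |f x θ| ≤ C)
    (hf_meas : Measurable (fun p : (Fin d → ℝ) × (Fin D → ℝ) => f p.1 p.2))
    (hy : Integrable (fun p : (Fin d → ℝ) × ℝ => p.2 ^ 2) P)
    (ρ : Measure (Fin D → ℝ)) [IsProbabilityMeasure ρ] (K : ℝ)
    (hK : ∫ θ, Upot P f θ θ ∂ρ ≤ K) :
    ∃ θv : Fin N → Fin D → ℝ, RiskN P f N θv ≤ Risk P f ρ + K / N := by
  have hNpos : (0:ℝ) < N := Nat.cast_pos.mpr hN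
  have hN' : (N : ℝ) ≠ 0 := hNpos.ne'
  set π := Measure.pi (fun _ : Fin N => ρ) with hπ
  have hVm := V_meas P f hf_meas
  have hUm := U_meas P f hf_meas
  have hUdm : StronglyMeasurable (fun θ0 : Fin D → ℝ => Upot P f θ0 θ0) :=
    hUm.comp_measurable (g := fun θ0 => (θ0, θ0)) (measurable_id.prodMk measurable_id)
  have IV : ∀ i : Fin N, Integrable (fun θv : Fin N → Fin D → ℝ => Vpot P f (θv i)) π :=
    fun i => Integrable.mono' (integrable_const (C * ∫ p, |p.2| ∂P))
      ((hVm.comp_measurable (measurable_pi_apply i)).aestronglyMeasurable)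
      (ae_of_all _ fun θv => by rw [Real.norm_eq_abs]; exact V_bound P f hf_bdd hy _)
  have IU : ∀ i j : Fin N,
      Integrable (fun θv : Fin N → Fin D → ℝ => Upot P f (θv i) (θv j)) π :=
    fun i j => Integrable.mono' (integrable_const (C ^ 2))
      ((hUm.comp_measurable (g := fun θv : Fin N → Fin D → ℝ => (θv i, θv j))
        ((measurable_pi_apply i).prodMk (measurable_pi_apply j))).aestronglyMeasurable)
      (ae_of_all _ fun θv => by rw [Real.norm_eq_abs]; exact U_bound P f hf_bdd _ _)
  set Vint := ∫ θ, Vpot P f θ ∂ρ with hVint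
  set Dint := ∫ θ, Upot P f θ θ ∂ρ with hDint
  set O := ∫ θ, ∫ θ', Upot P f θ θ' ∂ρ ∂ρ with hO
  have hVi : ∀ i : Fin N, ∫ θv, Vpot P f (θv i) ∂π = Vint := by
    intro i
    have hmap : Measure.map (fun θv : Fin N → Fin D → ℝ => θv i) π = ρ := by
      rw [hπ]; exact map_eval_pi' ρ i
    have hA : AEStronglyMeasurable (Vpot P f)
        (Measure.map (fun θv : Fin N → Fin D → ℝ => θv i) π) := by
      rw [hmap]; exact hVm.aestronglyMeasurable
    have hphi : AEMeasurable (fun θv : Fin N → Fin D → ℝ => θv i) π :=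
      (measurable_pi_apply i).aemeasurable
    have key := integral_map hphi hA
    rw [hmap] at key
    exact key.symm
  have hUdi : ∀ i : Fin N, ∫ θv, Upot P f (θv i) (θv i) ∂π = Dint := by
    intro i
    have hmap : Measure.map (fun θv : Fin N → Fin D → ℝ => θv i) π = ρ := by
      rw [hπ]; exact map_eval_pi' ρ i
    have hA : AEStronglyMeasurable (fun θ0 : Fin D → ℝ => Upot P f θ0 θ0)
        (Measure.map (fun θv : Fin N → Fin D → ℝ => θv i) π) := by
      rw [hmap]; exact hUdm.aestronglyMeasurable
    have hphi : AEMeasurable (fun θv : Fin N → Fin D → ℝ => θv i) π :=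
      (measurable_pi_apply i).aemeasurable
    have key := integral_map hphi hA
    rw [hmap] at key
    exact key.symm
  have hIntProd : Integrable (fun q : (Fin D → ℝ) × (Fin D → ℝ) => Upot P f q.1 q.2)
      (ρ.prod ρ) :=
    Integrable.mono' (integrable_const (C ^ 2)) hUm.aestronglyMeasurable
      (ae_of_all _ fun q => by rw [Real.norm_eq_abs]; exact U_bound P f hf_bdd _ _)
  have hUij : ∀ i j : Fin N, i ≠ j →
      ∫ θv, Upot P f (θv i) (θv j) ∂π = O := by
    intro i j hij
    have hmap : Measure.map (fun θv : Fin N → Fin D → ℝ => (θv i, θv j)) π = ρ.prod ρ := by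
      rw [hπ]; exact map_pair_pi ρ i j hij
    have hA : AEStronglyMeasurable (fun q : (Fin D → ℝ) × (Fin D → ℝ) => Upot P f q.1 q.2)
        (Measure.map (fun θv : Fin N → Fin D → ℝ => (θv i, θv j)) π) := by
      rw [hmap]; exact hUm.aestronglyMeasurable
    have hprod : ∫ q, Upot P f q.1 q.2 ∂(ρ.prod ρ) = O :=
      integral_prod _ hIntProd
    have hphi : AEMeasurable (fun θv : Fin N → Fin D → ℝ => (θv i, θv j)) π :=
      ((measurable_pi_apply i).prodMk (measurable_pi_apply j)).aemeasurable
    have key := integral_map hphi hA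
    rw [hmap] at key
    exact key.symm.trans hprod
  have h1 : Integrable (fun θv : Fin N → Fin D → ℝ => ∑ i, Vpot P f (θv i)) π :=
    integrable_finset_sum _ (fun i _ => IV i)
  have h2 : Integrable (fun θv : Fin N → Fin D → ℝ => ∑ i, ∑ j, Upot P f (θv i) (θv j)) π :=
    integrable_finset_sum _ (fun i _ => integrable_finset_sum _ fun j _ => IU i j)
  have hfeq : (fun θv : Fin N → Fin D → ℝ => RiskN P f N θv) = fun θv =>
      (Rhash P + (2 / (N : ℝ)) * ∑ i, Vpot P f (θv i))
        + (1 / (N : ℝ) ^ 2) * ∑ i, ∑ j, Upot P f (θv i) (θv j) := by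
    funext θv; rw [RiskN]
  have hIR : Integrable (RiskN P f N) π := by
    have : RiskN P f N = fun θv =>
        (Rhash P + (2 / (N : ℝ)) * ∑ i, Vpot P f (θv i))
          + (1 / (N : ℝ) ^ 2) * ∑ i, ∑ j, Upot P f (θv i) (θv j) := hfeq
    rw [this]
    exact ((integrable_const _).add (h1.const_mul _)).add (h2.const_mul _)
  have hsum_j : ∀ i : Fin N,
      ∫ θv, (∑ j, Upot P f (θv i) (θv j)) ∂π = Dint + ((N:ℝ) - 1) * O := by
    intro i
    rw [integral_finset_sum _ (fun j _ => IU i j)]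
    rw [← Finset.add_sum_erase _ _ (Finset.mem_univ i), hUdi i]
    have hrest : ∀ j ∈ Finset.univ.erase i, ∫ θv, Upot P f (θv i) (θv j) ∂π = O :=
      fun j hj => hUij i j (Finset.ne_of_mem_erase hj).symm
    rw [Finset.sum_congr rfl hrest, Finset.sum_const,
      Finset.card_erase_of_mem (Finset.mem_univ i), Finset.card_univ, Fintype.card_fin,
      nsmul_eq_mul]
    congr 2
    rw [Nat.cast_sub hN]
    simp
  have hI : ∫ θv, RiskN P f N θv ∂π = Risk P f ρ + (Dint - O) / N := by
    have e1 : (∫ θv, RiskN P f N θv ∂π)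
        = (∫ θv, (Rhash P + (2/(N:ℝ)) * ∑ i, Vpot P f (θv i)) ∂π)
          + ∫ θv, (1/(N:ℝ)^2) * ∑ i, ∑ j, Upot P f (θv i) (θv j) ∂π := by
      rw [hfeq]
      exact integral_add ((integrable_const _).add (h1.const_mul _)) (h2.const_mul _)
    have e2a : (∫ θv, (Rhash P + (2/(N:ℝ)) * ∑ i, Vpot P f (θv i)) ∂π)
        = (∫ _θv : Fin N → Fin D → ℝ, Rhash P ∂π)
          + ∫ θv, (2/(N:ℝ)) * ∑ i, Vpot P f (θv i) ∂π :=
      integral_add (integrable_const _) (h1.const_mul _)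
    have e3 : (∫ θv, ∑ i, Vpot P f (θv i) ∂π) = (N:ℝ) * Vint := by
      rw [integral_finset_sum _ (fun i _ => IV i),
        Finset.sum_congr rfl (fun i _ => hVi i), Finset.sum_const, Finset.card_univ,
        Fintype.card_fin, nsmul_eq_mul]
    have e4 : (∫ θv, (1/(N:ℝ)^2) * ∑ i, ∑ j, Upot P f (θv i) (θv j) ∂π)
        = (1/(N:ℝ)^2) * ((N:ℝ) * (Dint + ((N:ℝ)-1) * O)) := by
      rw [integral_const_mul,
        integral_finset_sum _ (fun i _ => integrable_finset_sum _ fun j _ => IU i j),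
        Finset.sum_congr rfl (fun i _ => hsum_j i), Finset.sum_const, Finset.card_univ,
        Fintype.card_fin, nsmul_eq_mul]
    rw [e1, e2a, integral_const, integral_const_mul, e3, e4, Risk, ← hVint, ← hO]
    simp only [measure_univ, probReal_univ, ENNReal.toReal_one, one_smul, smul_eq_mul, one_mul]
    field_simp
    ring
  obtain ⟨θv, hθv⟩ := exists_le_integral hIR
  refine ⟨θv, hθv.trans ?_⟩
  rw [hI]
  have hOn : 0 ≤ O := by rw [hO]; exact double_U_nonneg P f hf_bdd hf_meas ρ
  have hDO : Dint - O ≤ K := by linarith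
  exact (add_le_add_iff_left _).mpr ((div_le_div_iff_of_pos_right hNpos).mpr hDO)


/-- Proposition 1: under condition (a) or (b), the infimum of the finite-`N` risk
is within `K/N` of the infimum of the asymptotic risk. -/
theorem finite_N_risk_infimum_close
    (d D N : ℕ) (hN : 0 < N)
    (P : Measure ((Fin d → ℝ) × ℝ)) [IsProbabilityMeasure P]
    (f : (Fin d → ℝ) → (Fin D → ℝ) → ℝ)
    (hf_bdd : ∃ C, ∀ x θ, |f x θ| ≤ C)
    (hf_meas : Measurable (fun p : (Fin d → ℝ) × (Fin D → ℝ) => f p.1 p.2))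
    (hy : Integrable (fun p : (Fin d → ℝ) × ℝ => p.2 ^ 2) P)
    (K : ℝ)
    (h : (∃ ρstar : Measure (Fin D → ℝ), IsProbabilityMeasure ρstar ∧
            Risk P f ρstar
              = ⨅ ρ : {ρ : Measure (Fin D → ℝ) // IsProbabilityMeasure ρ}, Risk P f ρ.1 ∧
            ∫ θ, Upot P f θ θ ∂ρstar ≤ K)
        ∨ (∃ ε₀ > (0 : ℝ), ∀ ρ : Measure (Fin D → ℝ), IsProbabilityMeasure ρ →
            Risk P f ρ
              ≤ (⨅ ρ' : {ρ' : Measure (Fin D → ℝ) // IsProbabilityMeasure ρ'}, Risk P f ρ'.1) + ε₀ →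
            ∫ θ, Upot P f θ θ ∂ρ ≤ K)) :
    |(⨅ θ : Fin N → Fin D → ℝ, RiskN P f N θ)
      - ⨅ ρ : {ρ : Measure (Fin D → ℝ) // IsProbabilityMeasure ρ}, Risk P f ρ.1| ≤ K / N := by
  obtain ⟨C, hf_bdd⟩ := hf_bdd
  haveI : Nonempty {ρ : Measure (Fin D → ℝ) // IsProbabilityMeasure ρ} :=
    ⟨⟨Measure.dirac (fun _ => 0), inferInstance⟩⟩
  set Rinf := ⨅ ρ : {ρ : Measure (Fin D → ℝ) // IsProbabilityMeasure ρ}, Risk P f ρ.1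
    with hRinf
  have hbdd : BddBelow (Set.range
      fun ρ : {ρ : Measure (Fin D → ℝ) // IsProbabilityMeasure ρ} => Risk P f ρ.1) := by
    refine ⟨Rhash P - 2 * (C * ∫ p, |p.2| ∂P) - C ^ 2, ?_⟩
    rintro x ⟨ρ, rfl⟩
    haveI := ρ.2
    exact Risk_lb P f hf_bdd hy ρ.1
  have hlo : ∀ θv : Fin N → Fin D → ℝ, Rinf ≤ RiskN P f N θv := fun θv => by
    haveI := empMeas_prob hN θv
    rw [RiskN_eq_emp hN P f θv, hRinf]
    exact ciInf_le hbdd ⟨empMeas θv, empMeas_prob hN θv⟩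
  have hbddN : BddBelow (Set.range (RiskN P f N)) :=
    ⟨Rinf, by rintro x ⟨θv, rfl⟩; exact hlo θv⟩
  have hlow : Rinf ≤ ⨅ θv : Fin N → Fin D → ℝ, RiskN P f N θv := le_ciInf hlo
  have hkey : ∀ ρ : Measure (Fin D → ℝ), IsProbabilityMeasure ρ →
      (∫ θ, Upot P f θ θ ∂ρ ≤ K) →
      (⨅ θv : Fin N → Fin D → ℝ, RiskN P f N θv) ≤ Risk P f ρ + K / N := by
    intro ρ hρ hU
    haveI := hρ
    obtain ⟨θv, hθv⟩ := exists_good_params hN P f hf_bdd hf_meas hy ρ K hU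
    exact (ciInf_le hbddN θv).trans hθv
  have hK0 : 0 ≤ K := by
    rcases h with ⟨ρs, hρs, _, hUK⟩ | ⟨ε₀, hε₀, hb⟩
    · haveI := hρs
      exact (integral_nonneg (fun θ => Udiag_nonneg P f θ)).trans hUK
    · have hlt : (⨅ ρ : {ρ : Measure (Fin D → ℝ) // IsProbabilityMeasure ρ}, Risk P f ρ.1)
          < Rinf + ε₀ := by rw [← hRinf]; linarith
      obtain ⟨ρ, hρ⟩ := exists_lt_of_ciInf_lt hlt
      haveI := ρ.2
      exact (integral_nonneg (fun θ => Udiag_nonneg P f θ)).trans (hb ρ.1 ρ.2 hρ.le)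
  have hup : (⨅ θv : Fin N → Fin D → ℝ, RiskN P f N θv) ≤ Rinf + K / N := by
    rcases h with ⟨ρs, hρs, hopt, hUK⟩ | ⟨ε₀, hε₀, hb⟩
    · have := hkey ρs hρs hUK
      rw [hopt] at this
      exact this
    · refine le_of_forall_pos_le_add fun ε hε => ?_
      have hlt : (⨅ ρ : {ρ : Measure (Fin D → ℝ) // IsProbabilityMeasure ρ}, Risk P f ρ.1)
          < Rinf + min ε ε₀ := by rw [← hRinf]; have := lt_min hε hε₀; linarith
      obtain ⟨ρ, hρ⟩ := exists_lt_of_ciInf_lt hlt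
      haveI := ρ.2
      have hUρ : ∫ θ, Upot P f θ θ ∂ρ.1 ≤ K := by
        refine hb ρ.1 ρ.2 (hρ.le.trans ?_)
        have := min_le_right ε ε₀
        rw [hRinf]
        linarith
      have h1 := hkey ρ.1 ρ.2 hUρ
      have h2 : Risk P f ρ.1 ≤ Rinf + ε := by
        have := min_le_left ε ε₀
        exact hρ.le.trans (by linarith)
      linarith
  have hKN : 0 ≤ K / N := div_nonneg hK0 (Nat.cast_nonneg N)
  rw [abs_le]
  constructor
  · linarith
  · linarith
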